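/- The eigenspace of U restricted to 𝓛 for an eigenvalue λ ∉ {±1} is given by ker(λI - U|_𝓛) = {d_A* f - λ d_B* f : f ∈ ker(μI - T)} where μ = (λ + λ⁻¹)/2. -/

import Mathlib

open ContinuousLinearMap

set_option maxHeartbeats 2000000 in
theorem stmt18 {K₁ K₂ : Type*}
    [NormedAddCommGroup K₁] [InnerProductSpace ℂ K₁] [FiniteDimensional ℂ K₁]
    [NormedAddCommGroup K₂] [InnerProductSpace ℂ K₂] [FiniteDimensional ℂ K₂]
    (S : K₂ →L[ℂ] K₂) (hS : IsSelfAdjoint S) (hSu : S ∈ unitary (K₂ →L[ℂ] K₂))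
    (dA : K₂ →L[ℂ] K₁) (h : dA ∘L adjoint dA = 1)
    (dB : K₂ →L[ℂ] K₁) (hdB : dB = dA ∘L S)
    (T : K₁ →L[ℂ] K₁) (hT : T = dA ∘L adjoint dB)
    (U : K₂ →L[ℂ] K₂) (hU : U = S ∘L ((2:ℂ) • (adjoint dA ∘L dA) - 1))
    (lam : ℂ) (h0 : lam ≠ 0) (h1 : lam ≠ 1) (h2 : lam ≠ -1) :
    {φ : K₂ | φ ∈ LinearMap.range (adjoint dA : K₁ →ₗ[ℂ] K₂) ⊔ LinearMap.range (adjoint dB : K₁ →ₗ[ℂ] K₂) ∧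
        U φ = lam • φ}
      = {φ : K₂ | ∃ f : K₁, T f = ((lam + lam⁻¹) / 2) • f ∧
          φ = adjoint dA f - lam • adjoint dB f} := by
  have hSadj : adjoint S = S := by rw [← star_eq_adjoint]; exact hS
  have hSS : S ∘L S = 1 := by
    have h' := hSu.1
    rw [hS.star_eq] at h'
    exact h'
  have hBA : adjoint dB = S ∘L adjoint dA := by rw [hdB, adjoint_comp, hSadj]
  have hAa : ∀ x : K₁, dA (adjoint dA x) = x := fun x => by
    rw [← comp_apply, h, ContinuousLinearMap.one_apply]
  have hSSx : ∀ x : K₂, S (S x) = x := fun x => by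
    rw [← comp_apply, hSS, ContinuousLinearMap.one_apply]
  have hBx : ∀ x : K₁, adjoint dB x = S (adjoint dA x) := fun x => by
    rw [hBA, comp_apply]
  have hTx : ∀ x : K₁, T x = dA (adjoint dB x) := fun x => by
    rw [hT, comp_apply]
  have hUx : ∀ x : K₂, U x = S ((2:ℂ) • adjoint dA (dA x) - x) := by
    intro x
    rw [hU]
    simp [comp_apply, sub_apply, smul_apply, one_apply]
  have hc : lam ^ 2 - 1 ≠ 0 := by
    intro hcontra
    rcases mul_eq_zero.1 (show (lam - 1) * (lam + 1) = 0 by linear_combination hcontra)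
        with hx | hx
    · exact h1 (sub_eq_zero.mp hx)
    · exact h2 (eq_neg_of_add_eq_zero_left hx)
  have hc1 : (1 : ℂ) - lam ^ 2 ≠ 0 := by
    intro hcontra
    exact hc (by linear_combination -hcontra)
  have key1 : ∀ x : K₁, U (adjoint dA x) = adjoint dB x := by
    intro x
    rw [hUx, hAa, hBx]
    congr 1
    module
  have key2 : ∀ x : K₁,
      U (adjoint dB x) = (2:ℂ) • adjoint dB (T x) - adjoint dA x := by
    intro x
    rw [hUx, ← hTx, map_sub, map_smul, hBx x, hSSx, ← hBx (T x)]
  ext φ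
  simp only [Set.mem_setOf_eq]
  constructor
  · rintro ⟨-, hUφ⟩
    have e0 : S ((2:ℂ) • adjoint dA (dA φ) - φ) = lam • φ := by
      rw [← hUx]; exact hUφ
    have e1 : (2:ℂ) • adjoint dA (dA φ) - φ = lam • S φ := by
      have := congrArg S e0
      rwa [hSSx, map_smul] at this
    have e2' : lam • dA (S φ) = dA φ := by
      have := congrArg dA e1
      rw [map_sub, map_smul, hAa, map_smul] at this
      linear_combination (norm := module) - this
    have e3 : lam • φ = (2:ℂ) • S (adjoint dA (dA φ)) - S φ := by
      rw [← e0, map_sub, map_smul]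
    have h5 : (lam ^ 2 - 1) • φ
        = (2 * lam) • S (adjoint dA (dA φ)) - (2:ℂ) • adjoint dA (dA φ) := by
      linear_combination (norm := module) lam • e3 + e1
    have hφ : φ = (lam ^ 2 - 1)⁻¹ •
        ((2 * lam) • S (adjoint dA (dA φ)) - (2:ℂ) • adjoint dA (dA φ)) := by
      rw [← h5, smul_smul, inv_mul_cancel₀ hc, one_smul]
    have e4 : (2:ℂ) • dA (S (adjoint dA (dA φ))) = lam • dA φ + dA (S φ) := by
      have := congrArg dA e3
      rw [map_smul, map_sub, map_smul] at this
      linear_combination (norm := module) -this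
    have eTa : (2 * lam) • T (dA φ) = ((1:ℂ) + lam ^ 2) • dA φ := by
      rw [hTx, hBx]
      linear_combination (norm := module) lam • e4 + e2'
    have h2l : (2 * lam : ℂ) ≠ 0 := mul_ne_zero two_ne_zero h0
    have hTa2 : T (dA φ) = (((1:ℂ) + lam ^ 2) / (2 * lam)) • dA φ := by
      apply smul_right_injective K₁ h2l
      show (2 * lam) • T (dA φ) = (2 * lam) • ((((1:ℂ) + lam ^ 2) / (2 * lam)) • dA φ)
      rw [eTa, smul_smul]
      congr 1
      field_simp
    refine ⟨(2 / (1 - lam ^ 2)) • dA φ, ?_, ?_⟩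
    · rw [map_smul, hTa2, smul_smul, smul_smul]
      congr 1
      field_simp
      ring
    · rw [map_smul, map_smul, hBx]
      conv_lhs => rw [hφ]
      match_scalars <;> field_simp <;> ring
  · rintro ⟨f, hf, rfl⟩
    refine ⟨?_, ?_⟩
    · exact Submodule.sub_mem _ (Submodule.mem_sup_left ⟨f, rfl⟩)
        (Submodule.smul_mem _ _ (Submodule.mem_sup_right ⟨f, rfl⟩))
    · rw [map_sub, map_smul, key1, key2, hf, map_smul]
      have hinv : lam⁻¹ * lam = 1 := inv_mul_cancel₀ h0
      match_scalars
      · linear_combination -hinv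
      · ring
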